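/- The knight's graph K_4 has no Hamiltonian cycle. -/

import Mathlib

def knightsGraph (n : ℕ) : SimpleGraph (Fin n × Fin n) where
  Adj a b := (|((a.1 : ℕ) : ℤ) - ((b.1 : ℕ) : ℤ)| = 1 ∧ |((a.2 : ℕ) : ℤ) - ((b.2 : ℕ) : ℤ)| = 2) ∨
             (|((a.1 : ℕ) : ℤ) - ((b.1 : ℕ) : ℤ)| = 2 ∧ |((a.2 : ℕ) : ℤ) - ((b.2 : ℕ) : ℤ)| = 1)
  symm := by
    refine ⟨fun a b h => ?_⟩
    rw [abs_sub_comm (((b.1 : ℕ) : ℤ)), abs_sub_comm (((b.2 : ℕ) : ℤ))]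
    exact h
  loopless := by
    refine ⟨fun a h => ?_⟩
    simp at h

instance knightsGraphDecidable (n : ℕ) : DecidableRel (knightsGraph n).Adj := fun _ _ =>
  inferInstanceAs (Decidable (_ ∨ _))

open SimpleGraph Walk

section Aux

variable {V : Type*} [DecidableEq V] {G : SimpleGraph V}

lemma countP_edges_aux' {u v : V} (p : G.Walk u v) (x : V) :
    p.edges.countP (fun e => decide (x ∈ e)) + (if x = u then 1 else 0) +
      (if x = v then 1 else 0) = 2 * p.support.count x := by
  induction p with
  | nil =>
    simp only [edges_nil, List.countP_nil, support_nil, List.count_cons, List.count_nil,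
      beq_iff_eq, zero_add]
    rename_i a
    rcases eq_or_ne x a with rfl | h1
    · simp
    · simp only [if_neg h1, if_neg (Ne.symm h1), mul_zero, add_zero]
  | @cons a b c h q ih =>
    have hne : a ≠ b := h.ne
    simp only [edges_cons, List.countP_cons, support_cons, List.count_cons, beq_iff_eq]
    have hd : (decide (x ∈ s(a, b)) : Bool) = decide (x = a ∨ x = b) := by
      simp [Sym2.mem_iff]
    rw [hd]
    simp only [decide_eq_true_eq]
    rcases eq_or_ne x a with rfl | h1 <;> rcases eq_or_ne x b with rfl | h2
    · exact absurd rfl hne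
    · simp only [eq_self_iff_true, true_or, if_true, if_neg h2] at ih ⊢
      omega
    · simp only [eq_self_iff_true, or_true, if_true, if_neg h1, if_neg (Ne.symm h1)] at ih ⊢
      omega
    · simp only [if_neg h1, if_neg h2, if_neg (Ne.symm h1),
        if_neg (show ¬(x = a ∨ x = b) by tauto)] at ih ⊢
      omega

lemma countP_le_count_add_count' {α : Type*} [DecidableEq α] (P : α → Bool) (e1 e2 : α)
    (l : List α) (h : ∀ e ∈ l, P e → e = e1 ∨ e = e2) :
    l.countP P ≤ l.count e1 + l.count e2 := by
  induction l with
  | nil => simp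
  | cons a l ih =>
    have ih' := ih (fun e he hPe => h e (List.mem_cons_of_mem _ he) hPe)
    simp only [List.countP_cons, List.count_cons, beq_iff_eq]
    by_cases hPa : P a
    · rcases h a (List.mem_cons_self) hPa with rfl | rfl
      · rw [if_pos hPa, if_pos rfl]
        split_ifs <;> omega
      · rw [if_pos hPa, if_pos rfl]
        split_ifs <;> omega
    · rw [if_neg (by simpa using hPa)]
      split_ifs <;> omega

lemma ham_countP {v : V} {p : G.Walk v v} (hp : p.IsHamiltonianCycle) (x : V) :
    p.edges.countP (fun e => decide (x ∈ e)) = 2 := by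
  have key := countP_edges_aux' p x
  rcases eq_or_ne x v with rfl | hx
  · rw [hp.count_support_self] at key
    simp only [eq_self_iff_true, if_true] at key
    omega
  · rw [hp.support_count_of_ne (Ne.symm hx)] at key
    simp only [if_neg hx] at key
    omega

lemma corner_edges {v : V} {p : G.Walk v v} (hp : p.IsHamiltonianCycle)
    (x n1 n2 : V) (h12 : s(x, n1) ≠ s(x, n2))
    (hnb : ∀ y, G.Adj x y → y = n1 ∨ y = n2) :
    s(x, n1) ∈ p.edges ∧ s(x, n2) ∈ p.edges := by
  have h2 := ham_countP hp x
  have hsub : ∀ e ∈ p.edges, (fun e => decide (x ∈ e)) e = true →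
      e = s(x, n1) ∨ e = s(x, n2) := by
    intro e he hxe
    simp only [decide_eq_true_eq] at hxe
    induction e with
    | h a b =>
      have hadj : G.Adj a b := p.adj_of_mem_edges he
      rcases Sym2.mem_iff.mp hxe with rfl | rfl
      · rcases hnb b hadj with rfl | rfl
        · exact Or.inl rfl
        · exact Or.inr rfl
      · rw [Sym2.eq_swap]
        rcases hnb a hadj.symm with rfl | rfl
        · exact Or.inl rfl
        · exact Or.inr rfl
  have hle := countP_le_count_add_count' _ _ _ p.edges hsub
  have hnodup : p.edges.Nodup := hp.isCycle.edges_nodup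
  have hc1 : p.edges.count s(x, n1) ≤ 1 := List.nodup_iff_count_le_one.mp hnodup _
  have hc2 : p.edges.count s(x, n2) ≤ 1 := List.nodup_iff_count_le_one.mp hnodup _
  rw [h2] at hle
  constructor <;> rw [← List.count_pos_iff] <;> omega

lemma step' {u v w : V} (hne : u ≠ v) {q : G.Walk u v} (hq : q.IsPath)
    (hm : s(u, w) ∈ q.edges) : ∃ (h : G.Adj u w) (r : G.Walk w v), q = Walk.cons h r := by
  cases q with
  | nil => exact absurd rfl hne
  | @cons _ x _ h' r =>
    rw [Walk.edges_cons] at hm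
    rcases List.mem_cons.mp hm with heq | hm'
    · rcases Sym2.eq_iff.mp heq with ⟨-, rfl⟩ | ⟨rfl, rfl⟩
      · exact ⟨h', r, rfl⟩
      · exact absurd rfl h'.ne
    · exact absurd (r.fst_mem_support_of_mem_edges hm')
        ((Walk.cons_isPath_iff _ _).mp hq).2

omit [DecidableEq V] in
lemma path_loop_eq_nil {a : V} {t : G.Walk a a} (ht : t.IsPath) : t = Walk.nil := by
  cases t with
  | nil => rfl
  | cons h r =>
    exact absurd r.end_mem_support ((Walk.cons_isPath_iff _ _).mp ht).2

lemma chain3 {x y z a : V} (hxa : x ≠ a) (hya : y ≠ a) (hza : z ≠ a)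
    (d1 : s(y, z) ≠ s(x, y)) (d2 : s(z, a) ≠ s(x, y)) (d3 : s(z, a) ≠ s(y, z))
    {q : G.Walk x a} (hq : q.IsPath)
    (m1 : s(x, y) ∈ q.edges) (m2 : s(y, z) ∈ q.edges) (m3 : s(z, a) ∈ q.edges) :
    q.length = 3 := by
  obtain ⟨h1, r, rfl⟩ := step' hxa hq m1
  have hr : r.IsPath := ((Walk.cons_isPath_iff _ _).mp hq).1
  rw [Walk.edges_cons] at m2 m3
  have m2r : s(y, z) ∈ r.edges := by
    rcases List.mem_cons.mp m2 with heq | hm'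
    · exact absurd heq d1
    · exact hm'
  obtain ⟨h2, s, rfl⟩ := step' hya hr m2r
  have hs : s.IsPath := ((Walk.cons_isPath_iff _ _).mp hr).1
  have m3s : s(z, a) ∈ s.edges := by
    rcases List.mem_cons.mp m3 with heq | hm'
    · exact absurd heq d2
    · rw [Walk.edges_cons] at hm'
      rcases List.mem_cons.mp hm' with heq | hm''
      · exact absurd heq d3
      · exact hm''
  obtain ⟨h3, t, rfl⟩ := step' hza hs m3s
  have ht : t.IsPath := ((Walk.cons_isPath_iff _ _).mp hs).1
  rw [path_loop_eq_nil ht]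
  simp

end Aux

def cornerA : Fin 4 × Fin 4 := (0, 0)
def cornerB : Fin 4 × Fin 4 := (3, 3)
def ctr1 : Fin 4 × Fin 4 := (1, 2)
def ctr2 : Fin 4 × Fin 4 := (2, 1)

theorem four_board_no_closed_tour (v : Fin 4 × Fin 4) (p : (knightsGraph 4).Walk v v) :
    ¬ p.IsHamiltonianCycle := by
  intro hp
  have hcard : Fintype.card (Fin 4 × Fin 4) = 16 := by simp
  have hlen : p.length = 16 := hp.length_eq.trans hcard
  have hnbA : ∀ y, (knightsGraph 4).Adj cornerA y → y = ctr1 ∨ y = ctr2 := by decide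
  have hnbB : ∀ y, (knightsGraph 4).Adj cornerB y → y = ctr1 ∨ y = ctr2 := by decide
  obtain ⟨eA1, eA2⟩ := corner_edges hp cornerA ctr1 ctr2 (by decide) hnbA
  obtain ⟨eB1, eB2⟩ := corner_edges hp cornerB ctr1 ctr2 (by decide) hnbB
  have hAmem : cornerA ∈ p.support := hp.mem_support cornerA
  have hq : (p.rotate cornerA hAmem).IsCycle := hp.isCycle.rotate hAmem
  have hperm : List.Perm (p.rotate cornerA hAmem).edges p.edges := (p.rotate_edges cornerA hAmem).perm
  have hqlen : (p.rotate cornerA hAmem).length = 16 := by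
    rw [← Walk.length_edges, hperm.length_eq, Walk.length_edges, hlen]
  generalize hgen : p.rotate cornerA hAmem = q at hq hperm hqlen
  obtain ⟨w, hAw, q', rfl⟩ : ∃ (w : Fin 4 × Fin 4) (hAw : (knightsGraph 4).Adj cornerA w)
      (q' : (knightsGraph 4).Walk w cornerA), q = Walk.cons hAw q' := by
    cases q with
    | nil => exact absurd rfl hq.ne_nil
    | cons h r => exact ⟨_, h, r, rfl⟩
  have hpath : q'.IsPath := ((SimpleGraph.Walk.cons_isCycle_iff q' hAw).mp hq).1
  have hq'len : q'.length = 15 := by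
    rw [Walk.length_cons] at hqlen; omega
  have hmemq : ∀ e, e ∈ p.edges → e ≠ s(cornerA, w) → e ∈ q'.edges := by
    intro e he hne
    have h1 : e ∈ (Walk.cons hAw q').edges := hperm.mem_iff.mpr he
    rw [Walk.edges_cons] at h1
    rcases List.mem_cons.mp h1 with heq | hm
    · exact absurd heq hne
    · exact hm
  rcases hnbA w hAw with rfl | rfl
  · -- w = ctr1 : chain ctr1 → B → ctr2 → A
    have m1 : s(ctr1, cornerB) ∈ q'.edges := by
      refine hmemq _ ?_ (by decide)
      rw [Sym2.eq_swap]; exact eB1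
    have m2 : s(cornerB, ctr2) ∈ q'.edges := hmemq _ eB2 (by decide)
    have m3 : s(ctr2, cornerA) ∈ q'.edges := by
      refine hmemq _ ?_ (by decide)
      rw [Sym2.eq_swap]; exact eA2
    have := chain3 (by decide) (by decide) (by decide) (by decide) (by decide) (by decide)
      hpath m1 m2 m3
    omega
  · -- w = ctr2 : chain ctr2 → B → ctr1 → A
    have m1 : s(ctr2, cornerB) ∈ q'.edges := by
      refine hmemq _ ?_ (by decide)
      rw [Sym2.eq_swap]; exact eB2
    have m2 : s(cornerB, ctr1) ∈ q'.edges := hmemq _ eB1 (by decide)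
    have m3 : s(ctr1, cornerA) ∈ q'.edges := by
      refine hmemq _ ?_ (by decide)
      rw [Sym2.eq_swap]; exact eA1
    have := chain3 (by decide) (by decide) (by decide) (by decide) (by decide) (by decide)
      hpath m1 m2 m3
    omega
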